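/- Let Y be a real n₁×n₂ matrix with singular value decomposition Y = ∑_{i=1}^{m} σ_i·u_i·v_iᵀ, where m = min(n₁, n₂), σ₁ ≥ σ₂ ≥ … ≥ σ_m ≥ 0, u₁, …, u_m ∈ ℝ^{n₁} are orthonormal, and v₁, …, v_m ∈ ℝ^{n₂} are orthonormal. Let r < m with σ_{r+1} > 0, and set Y₁ = ∑_{i=1}^{r} σ_i·u_i·v_iᵀ and Y₂ = ∑_{i=r+1}^{m} σ_i·u_i·v_iᵀ. Then for every b ∈ [0, σ_r/σ_{r+1}) and every real n₁×n₂ matrix Z with rank(Z) ≤ r, one has ‖Y₁ − (Y₁ + b·Y₂)‖_F ≤ ‖Z − (Y₁ + b·Y₂)‖_F; that is, Y₁ is a projection of Y₁ + b·Y₂ onto the rank level set {Z : rank(Z) ≤ r} in the Frobenius norm. -/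

import Mathlib

/-- The Frobenius norm of a real matrix. -/
noncomputable def frobNorm {n₁ n₂ : ℕ} (A : Matrix (Fin n₁) (Fin n₂) ℝ) : ℝ :=
  Real.sqrt (∑ i, ∑ j, A i j ^ 2)

private lemma residual_eq {n k : ℕ} (w : Fin k → Fin n → ℝ)
    (hw : ∀ a b, (∑ t, w a t * w b t) = if a = b then 1 else 0) (x : Fin n → ℝ) :
    ∑ t, (x t - ∑ a, (∑ s, w a s * x s) * w a t) ^ 2
      = (∑ t, x t ^ 2) - ∑ a, (∑ s, w a s * x s) ^ 2 := by
  set c : Fin k → ℝ := fun a => ∑ s, w a s * x s with hc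
  have T2 : ∑ t, x t * ∑ a, c a * w a t = ∑ a, c a ^ 2 := by
    calc ∑ t, x t * ∑ a, c a * w a t = ∑ t, ∑ a, c a * (w a t * x t) := by
          refine Finset.sum_congr rfl fun t _ => ?_
          rw [Finset.mul_sum]
          exact Finset.sum_congr rfl fun a _ => by ring
      _ = ∑ a, ∑ t, c a * (w a t * x t) := Finset.sum_comm
      _ = ∑ a, c a ^ 2 := by
          refine Finset.sum_congr rfl fun a _ => ?_
          rw [← Finset.mul_sum]
          rw [show (∑ t, w a t * x t) = c a from rfl]
          ring
  have T3 : ∑ t, (∑ a, c a * w a t) * (∑ b, c b * w b t) = ∑ a, c a ^ 2 := by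
    calc ∑ t, (∑ a, c a * w a t) * (∑ b, c b * w b t)
        = ∑ t, ∑ a, ∑ b, (c a * c b) * (w a t * w b t) := by
          refine Finset.sum_congr rfl fun t _ => ?_
          rw [Finset.sum_mul_sum]
          exact Finset.sum_congr rfl fun a _ => Finset.sum_congr rfl fun b _ => by ring
      _ = ∑ a, ∑ t, ∑ b, (c a * c b) * (w a t * w b t) := Finset.sum_comm
      _ = ∑ a, ∑ b, ∑ t, (c a * c b) * (w a t * w b t) := by
          exact Finset.sum_congr rfl fun a _ => Finset.sum_comm
      _ = ∑ a, ∑ b, (c a * c b) * (∑ t, w a t * w b t) := by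
          refine Finset.sum_congr rfl fun a _ => Finset.sum_congr rfl fun b _ => ?_
          exact (Finset.mul_sum Finset.univ (fun t => w a t * w b t) (c a * c b)).symm
      _ = ∑ a, c a ^ 2 := by
          refine Finset.sum_congr rfl fun a _ => ?_
          simp only [hw, mul_ite, mul_one, mul_zero, Finset.sum_ite_eq, Finset.mem_univ,
            if_true]
          ring
  calc ∑ t, (x t - ∑ a, c a * w a t) ^ 2
      = ∑ t, (x t ^ 2 - 2 * (x t * ∑ a, c a * w a t)
          + (∑ a, c a * w a t) * (∑ b, c b * w b t)) := by
        refine Finset.sum_congr rfl fun t _ => ?_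
        ring
    _ = (∑ t, x t ^ 2) - 2 * (∑ t, x t * ∑ a, c a * w a t)
          + ∑ t, (∑ a, c a * w a t) * (∑ b, c b * w b t) := by
        rw [Finset.sum_add_distrib, Finset.sum_sub_distrib, Finset.mul_sum]
    _ = (∑ t, x t ^ 2) - ∑ a, c a ^ 2 := by rw [T2, T3]; ring

private lemma bessel_ineq {n k : ℕ} (w : Fin k → Fin n → ℝ)
    (hw : ∀ a b, (∑ t, w a t * w b t) = if a = b then 1 else 0) (x : Fin n → ℝ) :
    ∑ a, (∑ s, w a s * x s) ^ 2 ≤ ∑ t, x t ^ 2 := by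
  have h := residual_eq w hw x
  have h0 : (0:ℝ) ≤ ∑ t, (x t - ∑ a, (∑ s, w a s * x s) * w a t) ^ 2 :=
    Finset.sum_nonneg fun t _ => sq_nonneg _
  linarith

/-- Sum of squares of a combination against an orthonormal family. -/
private lemma sum_sq_ortho {n₂ mm : ℕ} (s : Finset (Fin mm)) (v : Fin mm → Fin n₂ → ℝ)
    (hv : ∀ a b, (∑ t, v a t * v b t) = if a = b then 1 else 0) (α : Fin mm → ℝ) :
    ∑ j, (∑ i ∈ s, α i * v i j) ^ 2 = ∑ i ∈ s, α i ^ 2 := by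
  calc ∑ j, (∑ i ∈ s, α i * v i j) ^ 2
      = ∑ j, ∑ a ∈ s, ∑ c ∈ s, (α a * α c) * (v a j * v c j) := by
        refine Finset.sum_congr rfl fun j _ => ?_
        rw [sq, Finset.sum_mul_sum]
        exact Finset.sum_congr rfl fun a _ => Finset.sum_congr rfl fun c _ => by ring
    _ = ∑ a ∈ s, ∑ j, ∑ c ∈ s, (α a * α c) * (v a j * v c j) := Finset.sum_comm
    _ = ∑ a ∈ s, ∑ c ∈ s, ∑ j, (α a * α c) * (v a j * v c j) := by
        exact Finset.sum_congr rfl fun a _ => Finset.sum_comm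
    _ = ∑ a ∈ s, ∑ c ∈ s, (α a * α c) * (∑ j, v a j * v c j) := by
        refine Finset.sum_congr rfl fun a _ => Finset.sum_congr rfl fun c _ => ?_
        exact (Finset.mul_sum Finset.univ (fun j => v a j * v c j) (α a * α c)).symm
    _ = ∑ a ∈ s, α a ^ 2 := by
        refine Finset.sum_congr rfl fun a ha => ?_
        simp only [hv, mul_ite, mul_one, mul_zero]
        rw [Finset.sum_ite_eq s a (fun c => α a * α c), if_pos ha]
        ring

/-- Frobenius-type double sum for a combination `∑ f i' * g i' i * v i' j`. -/
private lemma frob_core {n₁ n₂ mm : ℕ} (s : Finset (Fin mm)) (v : Fin mm → Fin n₂ → ℝ)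
    (hv : ∀ a b, (∑ t, v a t * v b t) = if a = b then 1 else 0)
    (g : Fin mm → Fin n₁ → ℝ) (f : Fin mm → ℝ) :
    ∑ i, ∑ j, (∑ i' ∈ s, (f i' * g i' i) * v i' j) ^ 2
      = ∑ i' ∈ s, f i' ^ 2 * ∑ i, g i' i ^ 2 := by
  calc ∑ i, ∑ j, (∑ i' ∈ s, (f i' * g i' i) * v i' j) ^ 2
      = ∑ i, ∑ i' ∈ s, (f i' * g i' i) ^ 2 := by
        exact Finset.sum_congr rfl fun i _ => sum_sq_ortho s v hv _
    _ = ∑ i' ∈ s, ∑ i, (f i' * g i' i) ^ 2 := Finset.sum_comm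
    _ = ∑ i' ∈ s, f i' ^ 2 * ∑ i, g i' i ^ 2 := by
        refine Finset.sum_congr rfl fun i' _ => ?_
        rw [Finset.mul_sum]
        exact Finset.sum_congr rfl fun i _ => by ring

/-- Extract an orthonormal spanning family for the column space of `Z`. -/
private lemma exists_onb_colspace {n₁ n₂ r : ℕ} (Z : Matrix (Fin n₁) (Fin n₂) ℝ)
    (hZ : Z.rank ≤ r) :
    ∃ k : ℕ, k ≤ r ∧ ∃ w : Fin k → Fin n₁ → ℝ,
      (∀ a c, (∑ t, w a t * w c t) = if a = c then 1 else 0) ∧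
      (∀ i j, Z i j = ∑ a, (∑ t, w a t * Z t j) * w a i) := by
  set e : (Fin n₁ → ℝ) ≃ₗ[ℝ] EuclideanSpace ℝ (Fin n₁) :=
    (WithLp.linearEquiv 2 ℝ (Fin n₁ → ℝ)).symm with he
  set S : Submodule ℝ (EuclideanSpace ℝ (Fin n₁)) :=
    (LinearMap.range Z.mulVecLin).map e.toLinearMap with hS
  have hfin : Module.finrank ℝ S ≤ r := by
    rw [hS, LinearEquiv.finrank_map_eq]; exact hZ
  set B := stdOrthonormalBasis ℝ S with hB
  refine ⟨Module.finrank ℝ S, hfin,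
    fun a => ((B a : EuclideanSpace ℝ (Fin n₁)) : Fin n₁ → ℝ), ?_, ?_⟩
  · intro a c
    have h1 := B.orthonormal
    rw [orthonormal_iff_ite] at h1
    have h2 := h1 a c
    rw [Submodule.coe_inner, PiLp.inner_apply] at h2
    simp [RCLike.inner_apply, starRingEnd_apply] at h2
    rw [← h2]
    exact Finset.sum_congr rfl fun t _ => mul_comm _ _
  · have hmem : ∀ j : Fin n₂, e (fun i => Z i j) ∈ S := by
      intro j
      refine Submodule.mem_map_of_mem ?_
      exact ⟨Pi.single j 1, by simp [Matrix.mulVecLin]; rfl⟩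
    intro i j
    have h := congrArg (fun x : S => ((x : EuclideanSpace ℝ (Fin n₁)) : Fin n₁ → ℝ) i)
      (B.sum_repr ⟨e (fun i => Z i j), hmem j⟩)
    simp only [Submodule.coe_sum, Submodule.coe_smul, Finset.sum_apply, Pi.smul_apply,
      OrthonormalBasis.repr_apply_apply, Submodule.coe_inner, PiLp.inner_apply,
      RCLike.inner_apply, starRingEnd_apply, star_trivial, he,
      WithLp.linearEquiv_symm_apply, WithLp.ofLp_sum, WithLp.ofLp_smul, smul_eq_mul] at h
    refine h.symm.trans (Finset.sum_congr rfl fun a _ => ?_)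
    exact congrArg (· * _) (Finset.sum_congr rfl fun t _ => mul_comm _ _)

/-- Singular values are 0-indexed: `σ ⟨i, _⟩` is the `(i+1)`-th
singular value `σ_{i+1}`, so `σ_r = σ ⟨r - 1, _⟩` and `σ_{r+1} = σ ⟨r, _⟩`. -/
theorem stmt_19 {n₁ n₂ : ℕ} (m : ℕ) (hm : m = min n₁ n₂)
    (Y : Matrix (Fin n₁) (Fin n₂) ℝ)
    (σ : Fin m → ℝ) (hσnonneg : ∀ i, 0 ≤ σ i)
    (hσmono : ∀ i j : Fin m, i ≤ j → σ j ≤ σ i)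
    (u : Fin m → Fin n₁ → ℝ) (v : Fin m → Fin n₂ → ℝ)
    (hu : ∀ i j, (∑ t, u i t * u j t) = if i = j then 1 else 0)
    (hv : ∀ i j, (∑ t, v i t * v j t) = if i = j then 1 else 0)
    (hY : Y = ∑ i : Fin m, σ i • Matrix.vecMulVec (u i) (v i))
    (r : ℕ) (hr1 : 1 ≤ r) (hr : r < m)
    (hσpos : 0 < σ ⟨r, hr⟩)
    (Y₁ Y₂ : Matrix (Fin n₁) (Fin n₂) ℝ)
    (hY₁ : Y₁ = ∑ i ∈ Finset.univ.filter (fun i : Fin m => (i : ℕ) < r),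
      σ i • Matrix.vecMulVec (u i) (v i))
    (hY₂ : Y₂ = ∑ i ∈ Finset.univ.filter (fun i : Fin m => r ≤ (i : ℕ)),
      σ i • Matrix.vecMulVec (u i) (v i)) :
    ∀ b : ℝ, 0 ≤ b → b < σ ⟨r - 1, by omega⟩ / σ ⟨r, hr⟩ →
      ∀ Z : Matrix (Fin n₁) (Fin n₂) ℝ, Z.rank ≤ r →
        frobNorm (Y₁ - (Y₁ + b • Y₂)) ≤ frobNorm (Z - (Y₁ + b • Y₂)) := by
  intro b hb0 hbs Z hZrank
  obtain ⟨k, hk, w, hwo, hexp⟩ := exists_onb_colspace Z hZrank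
  set M : Matrix (Fin n₁) (Fin n₂) ℝ := Y₁ + b • Y₂ with hMdef
  set d : Fin m → ℝ := fun i => if (i : ℕ) < r then σ i else b * σ i with hd
  set s₁ : Finset (Fin m) := Finset.univ.filter (fun i : Fin m => (i : ℕ) < r) with hs₁
  set s₂ : Finset (Fin m) := Finset.univ.filter (fun i : Fin m => r ≤ (i : ℕ)) with hs₂
  have hfneg : Finset.univ.filter (fun i : Fin m => ¬ (i : ℕ) < r) = s₂ := by
    rw [hs₂]; ext i'; simp [not_lt]
  have husq : ∀ i', (∑ t, u i' t ^ 2) = 1 := by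
    intro i'; simpa [pow_two] using hu i' i'
  have hwsq : ∀ a, (∑ t, w a t ^ 2) = 1 := by
    intro a; simpa [pow_two] using hwo a a
  -- entrywise formulas
  have hY₁e : ∀ i j, Y₁ i j = ∑ i' ∈ s₁, (σ i' * u i' i) * v i' j := by
    intro i j
    rw [hY₁]
    rw [Matrix.sum_apply]
    exact Finset.sum_congr rfl fun i' _ => by
      simp [Matrix.vecMulVec_apply, mul_assoc]
  have hY₂e : ∀ i j, Y₂ i j = ∑ i' ∈ s₂, (σ i' * u i' i) * v i' j := by
    intro i j
    rw [hY₂]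
    rw [Matrix.sum_apply]
    exact Finset.sum_congr rfl fun i' _ => by
      simp [Matrix.vecMulVec_apply, mul_assoc]
  have hMe : ∀ i j, M i j = ∑ i', d i' * (u i' i * v i' j) := by
    intro i j
    have hsplit := Finset.sum_filter_add_sum_filter_not Finset.univ
      (fun i' : Fin m => (i' : ℕ) < r) (fun i' => d i' * (u i' i * v i' j))
    rw [hMdef, Matrix.add_apply, Matrix.smul_apply, smul_eq_mul, hY₁e, hY₂e, ← hsplit,
      hfneg]
    congr 1
    · refine Finset.sum_congr rfl fun i' hi' => ?_
      rw [Finset.mem_filter] at hi'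
      simp only [hd, if_pos hi'.2]
      ring
    · rw [Finset.mul_sum]
      refine Finset.sum_congr rfl fun i' hi' => ?_
      rw [hs₂, Finset.mem_filter] at hi'
      simp only [hd, if_neg (not_lt.mpr hi'.2)]
      ring
  -- the perpendicular residual per column
  have hsplitc : ∀ a j, (∑ t, w a t * (Z t j - M t j))
      = (∑ t, w a t * Z t j) - (∑ t, w a t * M t j) := by
    intro a j
    rw [← Finset.sum_sub_distrib]
    exact Finset.sum_congr rfl fun t _ => by ring
  have key1 : ∀ j, ∑ i, (M i j - ∑ a, (∑ t, w a t * M t j) * w a i) ^ 2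
      ≤ ∑ i, (Z i j - M i j) ^ 2 := by
    intro j
    have hres := residual_eq w hwo (fun t => Z t j - M t j)
    have hpt : ∀ i, ((Z i j - M i j) - ∑ a, (∑ s, w a s * (Z s j - M s j)) * w a i) ^ 2
        = (M i j - ∑ a, (∑ t, w a t * M t j) * w a i) ^ 2 := by
      intro i
      rw [← neg_sq (M i j - ∑ a, (∑ t, w a t * M t j) * w a i)]
      congr 1
      simp only [hsplitc, sub_mul, Finset.sum_sub_distrib]
      rw [← hexp i j]
      ring
    calc ∑ i, (M i j - ∑ a, (∑ t, w a t * M t j) * w a i) ^ 2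
        = ∑ i, ((Z i j - M i j) - ∑ a, (∑ s, w a s * (Z s j - M s j)) * w a i) ^ 2 :=
          (Finset.sum_congr rfl fun i _ => hpt i).symm
      _ = (∑ t, (Z t j - M t j) ^ 2) - ∑ a, (∑ s, w a s * (Z s j - M s j)) ^ 2 := hres
      _ ≤ ∑ i, (Z i j - M i j) ^ 2 := by
          have h0 : (0:ℝ) ≤ ∑ a, (∑ s, w a s * (Z s j - M s j)) ^ 2 :=
            Finset.sum_nonneg fun a _ => sq_nonneg _
          linarith
  set g : Fin m → Fin n₁ → ℝ :=
    fun i' i => u i' i - ∑ a, (∑ t, w a t * u i' t) * w a i with hg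
  set q : Fin m → ℝ := fun i' => ∑ i, g i' i ^ 2 with hq
  have eq3 : ∀ i j, M i j - ∑ a, (∑ t, w a t * M t j) * w a i
      = ∑ i', (d i' * g i' i) * v i' j := by
    intro i j
    have hwM : ∀ a, (∑ t, w a t * M t j)
        = ∑ i', (d i' * (∑ t, w a t * u i' t)) * v i' j := by
      intro a
      calc ∑ t, w a t * M t j = ∑ t, ∑ i', d i' * (w a t * u i' t) * v i' j := by
            refine Finset.sum_congr rfl fun t _ => ?_
            rw [hMe t j, Finset.mul_sum]
            exact Finset.sum_congr rfl fun i' _ => by ring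
        _ = ∑ i', ∑ t, d i' * (w a t * u i' t) * v i' j := Finset.sum_comm
        _ = ∑ i', (d i' * (∑ t, w a t * u i' t)) * v i' j := by
            refine Finset.sum_congr rfl fun i' _ => ?_
            rw [Finset.mul_sum (Finset.univ) (fun t => w a t * u i' t) (d i'),
              Finset.sum_mul]
    calc M i j - ∑ a, (∑ t, w a t * M t j) * w a i
        = (∑ i', d i' * (u i' i * v i' j))
          - ∑ a, (∑ i', ((d i' * (∑ t, w a t * u i' t)) * v i' j) * w a i) := by
          rw [hMe i j]
          congr 1
          refine Finset.sum_congr rfl fun a _ => ?_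
          rw [hwM a, Finset.sum_mul]
      _ = (∑ i', d i' * (u i' i * v i' j))
          - ∑ i', (∑ a, ((d i' * (∑ t, w a t * u i' t)) * v i' j) * w a i) := by
          rw [Finset.sum_comm]
      _ = ∑ i', (d i' * g i' i) * v i' j := by
          rw [← Finset.sum_sub_distrib]
          refine Finset.sum_congr rfl fun i' _ => ?_
          have hpull : ∑ a, ((d i' * (∑ t, w a t * u i' t)) * v i' j) * w a i
              = (d i' * v i' j) * ∑ a, (∑ t, w a t * u i' t) * w a i := by
            rw [Finset.mul_sum (Finset.univ)
              (fun a => (∑ t, w a t * u i' t) * w a i) (d i' * v i' j)]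
            exact Finset.sum_congr rfl fun a _ => by ring
          rw [hpull]
          simp only [hg]
          ring
  have step3 : ∑ i', d i' ^ 2 * q i' ≤ ∑ j, ∑ i, (Z i j - M i j) ^ 2 := by
    calc ∑ i', d i' ^ 2 * q i'
        = ∑ i, ∑ j, (∑ i', (d i' * g i' i) * v i' j) ^ 2 :=
          (frob_core Finset.univ v hv g d).symm
      _ = ∑ j, ∑ i, (∑ i', (d i' * g i' i) * v i' j) ^ 2 := Finset.sum_comm
      _ = ∑ j, ∑ i, (M i j - ∑ a, (∑ t, w a t * M t j) * w a i) ^ 2 := by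
          exact Finset.sum_congr rfl fun j _ => Finset.sum_congr rfl fun i _ =>
            congrArg (· ^ 2) (eq3 i j).symm
      _ ≤ ∑ j, ∑ i, (Z i j - M i j) ^ 2 := Finset.sum_le_sum fun j _ => key1 j
  -- properties of q
  have hq0 : ∀ i', 0 ≤ q i' := fun i' => Finset.sum_nonneg fun i _ => sq_nonneg _
  have hqres : ∀ i', q i' = 1 - ∑ a, (∑ t, w a t * u i' t) ^ 2 := by
    intro i'
    have hres := residual_eq w hwo (u i')
    calc q i' = (∑ t, u i' t ^ 2) - ∑ a, (∑ s, w a s * u i' s) ^ 2 := hres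
      _ = 1 - ∑ a, (∑ t, w a t * u i' t) ^ 2 := by rw [husq i']
  have hq1 : ∀ i', q i' ≤ 1 := by
    intro i'
    rw [hqres i']
    have h0 : (0:ℝ) ≤ ∑ a, (∑ t, w a t * u i' t) ^ 2 :=
      Finset.sum_nonneg fun a _ => sq_nonneg _
    linarith
  have hqsumlow : (m : ℝ) - r ≤ ∑ i', q i' := by
    have h1 : ∑ i' : Fin m, ∑ a, (∑ t, w a t * u i' t) ^ 2 ≤ (k : ℝ) := by
      calc ∑ i' : Fin m, ∑ a, (∑ t, w a t * u i' t) ^ 2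
          = ∑ a, ∑ i' : Fin m, (∑ t, w a t * u i' t) ^ 2 := Finset.sum_comm
        _ = ∑ a, ∑ i' : Fin m, (∑ t, u i' t * w a t) ^ 2 := by
            refine Finset.sum_congr rfl fun a _ => Finset.sum_congr rfl fun i' _ => ?_
            congr 1
            exact Finset.sum_congr rfl fun t _ => mul_comm _ _
        _ ≤ ∑ a : Fin k, ∑ t, w a t ^ 2 :=
            Finset.sum_le_sum fun a _ => bessel_ineq u hu (w a)
        _ = ∑ a : Fin k, (1:ℝ) := Finset.sum_congr rfl fun a _ => hwsq a
        _ = (k : ℝ) := by simp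
    have h2 : ∑ i', q i'
        = (m : ℝ) - ∑ i' : Fin m, ∑ a, (∑ t, w a t * u i' t) ^ 2 := by
      calc ∑ i', q i' = ∑ i' : Fin m, (1 - ∑ a, (∑ t, w a t * u i' t) ^ 2) :=
            Finset.sum_congr rfl fun i' _ => hqres i'
        _ = (m : ℝ) - ∑ i' : Fin m, ∑ a, (∑ t, w a t * u i' t) ^ 2 := by
            rw [Finset.sum_sub_distrib]
            simp
    have hkr : (k : ℝ) ≤ (r : ℝ) := Nat.cast_le.mpr hk
    linarith
  -- d bounds
  set τ : ℝ := b * σ ⟨r, hr⟩ with hτ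
  have hτ0 : 0 ≤ τ := mul_nonneg hb0 (hσnonneg _)
  have hup : ∀ i' ∈ s₂, d i' ^ 2 ≤ τ ^ 2 := by
    intro i' hi'
    rw [hs₂, Finset.mem_filter] at hi'
    have h1 : d i' = b * σ i' := by simp only [hd, if_neg (not_lt.mpr hi'.2)]
    have h2 : σ i' ≤ σ ⟨r, hr⟩ := hσmono ⟨r, hr⟩ i' (by simpa [Fin.le_def] using hi'.2)
    have h3 : 0 ≤ σ i' := hσnonneg i'
    rw [h1, hτ]
    exact pow_le_pow_left₀ (mul_nonneg hb0 h3) (mul_le_mul_of_nonneg_left h2 hb0) 2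
  have hlow : ∀ i' ∈ s₁, τ ^ 2 ≤ d i' ^ 2 := by
    intro i' hi'
    rw [hs₁, Finset.mem_filter] at hi'
    have h1 : d i' = σ i' := by simp only [hd, if_pos hi'.2]
    have h2 : σ ⟨r - 1, by omega⟩ ≤ σ i' :=
      hσmono i' ⟨r - 1, by omega⟩ (by simp [Fin.le_def]; omega)
    have h3 : τ < σ ⟨r - 1, by omega⟩ := by
      rw [hτ]
      exact (lt_div_iff₀ hσpos).mp hbs
    rw [h1]
    exact pow_le_pow_left₀ hτ0 (le_trans (le_of_lt h3) h2) 2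
  have hcard : ((s₂.card : ℝ)) = (m : ℝ) - r := by
    have he : s₂ = Finset.Ici (⟨r, hr⟩ : Fin m) := by
      rw [hs₂]; ext i'; simp [Finset.mem_Ici, Fin.le_def]
    rw [he, Fin.card_Ici, Nat.cast_sub (le_of_lt hr)]
  -- rearrangement
  have hrearr : ∑ i' ∈ s₂, d i' ^ 2 ≤ ∑ i', d i' ^ 2 * q i' := by
    have hsplit : ∑ i' : Fin m, d i' ^ 2 * q i'
        = ∑ i' ∈ s₁, d i' ^ 2 * q i' + ∑ i' ∈ s₂, d i' ^ 2 * q i' := by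
      rw [← Finset.sum_filter_add_sum_filter_not Finset.univ
        (fun i' : Fin m => (i' : ℕ) < r) (fun i' => d i' ^ 2 * q i'), hfneg]
    have hA1 : ∑ i' ∈ s₂, d i' ^ 2 * (1 - q i')
        ≤ τ ^ 2 * ((m : ℝ) - r - ∑ i' ∈ s₂, q i') := by
      calc ∑ i' ∈ s₂, d i' ^ 2 * (1 - q i') ≤ ∑ i' ∈ s₂, τ ^ 2 * (1 - q i') :=
            Finset.sum_le_sum fun i' hi' =>
              mul_le_mul_of_nonneg_right (hup i' hi') (by linarith [hq1 i'])
        _ = τ ^ 2 * ((m : ℝ) - r - ∑ i' ∈ s₂, q i') := by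
            rw [← Finset.mul_sum s₂ (fun i' => (1:ℝ) - q i') (τ ^ 2)]
            congr 1
            rw [Finset.sum_sub_distrib, Finset.sum_const, nsmul_eq_mul, mul_one, hcard]
    have hA2 : τ ^ 2 * ∑ i' ∈ s₁, q i' ≤ ∑ i' ∈ s₁, d i' ^ 2 * q i' := by
      rw [Finset.mul_sum s₁ (fun i' => q i') (τ ^ 2)]
      exact Finset.sum_le_sum fun i' hi' =>
        mul_le_mul_of_nonneg_right (hlow i' hi') (hq0 i')
    have hA3 : ∑ i' ∈ s₁, q i' + ∑ i' ∈ s₂, q i' = ∑ i', q i' := by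
      rw [← Finset.sum_filter_add_sum_filter_not Finset.univ
        (fun i' : Fin m => (i' : ℕ) < r) (fun i' => q i'), hfneg]
    have hA5 : τ ^ 2 * ((m : ℝ) - r - ∑ i' ∈ s₂, q i') ≤ τ ^ 2 * ∑ i' ∈ s₁, q i' := by
      apply mul_le_mul_of_nonneg_left _ (sq_nonneg τ)
      linarith
    have hA6 : ∑ i' ∈ s₂, d i' ^ 2
        = ∑ i' ∈ s₂, d i' ^ 2 * q i' + ∑ i' ∈ s₂, d i' ^ 2 * (1 - q i') := by
      rw [← Finset.sum_add_distrib]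
      exact Finset.sum_congr rfl fun i' _ => by ring
    linarith
  -- left side
  have hLHS : ∑ i, ∑ j, (Y₁ - M) i j ^ 2 = ∑ i' ∈ s₂, d i' ^ 2 := by
    calc ∑ i, ∑ j, (Y₁ - M) i j ^ 2
        = ∑ i, ∑ j, (∑ i' ∈ s₂, ((b * σ i') * u i' i) * v i' j) ^ 2 := by
          refine Finset.sum_congr rfl fun i _ => Finset.sum_congr rfl fun j _ => ?_
          have hentry : (Y₁ - M) i j = -(∑ i' ∈ s₂, ((b * σ i') * u i' i) * v i' j) := by
            rw [hMdef, Matrix.sub_apply, Matrix.add_apply, Matrix.smul_apply, smul_eq_mul,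
              hY₂e i j, Finset.mul_sum s₂ (fun i' => (σ i' * u i' i) * v i' j) b]
            rw [show ∑ i' ∈ s₂, b * ((σ i' * u i' i) * v i' j)
              = ∑ i' ∈ s₂, ((b * σ i') * u i' i) * v i' j from
              Finset.sum_congr rfl fun i' _ => by ring]
            ring
          rw [hentry, neg_sq]
      _ = ∑ i' ∈ s₂, (b * σ i') ^ 2 * ∑ i, u i' i ^ 2 :=
          frob_core s₂ v hv u (fun i' => b * σ i')
      _ = ∑ i' ∈ s₂, d i' ^ 2 := by
          refine Finset.sum_congr rfl fun i' hi' => ?_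
          rw [hs₂, Finset.mem_filter] at hi'
          rw [husq i', mul_one]
          simp only [hd, if_neg (not_lt.mpr hi'.2)]
  -- conclude
  show frobNorm (Y₁ - M) ≤ frobNorm (Z - M)
  unfold frobNorm
  apply Real.sqrt_le_sqrt
  have hZM : ∑ i, ∑ j, (Z - M) i j ^ 2 = ∑ j, ∑ i, (Z i j - M i j) ^ 2 := by
    rw [Finset.sum_comm]
    exact Finset.sum_congr rfl fun j _ => Finset.sum_congr rfl fun i _ => by
      rw [Matrix.sub_apply]
  rw [hLHS, hZM]
  exact le_trans hrearr step3
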